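/- Let κ be an infinite regular cardinal with 2^{<κ} = κ. Then there exists a family 𝒦 of subsets of κ of cardinality 2^κ such that every member of 𝒦 has cardinality κ and any two distinct members K₁, K₂ ∈ 𝒦 are almost disjoint, i.e., card(K₁ ∩ K₂) < κ. -/

import Mathlib

open Cardinal Set

universe u

/-- Assume moreover `2 ^ {<κ} = κ`. Let `κ` be an infinite regular cardinal.  Then there is a family `𝒦` of
subsets of `κ` (formalized via the canonical type `κ.ord.ToType` of ordinals below `κ`) of
cardinality `2 ^ κ` such that every member of `𝒦` has cardinality `κ` and any two distinct
members are almost disjoint: their intersection has cardinality `< κ`. -/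
theorem statement8 (κ : Cardinal.{u}) (hreg : κ.IsRegular) (hpow : (2 : Cardinal.{u}) ^< κ = κ) :
    ∃ 𝒦 : Set (Set κ.ord.ToType),
      Cardinal.mk 𝒦 = 2 ^ κ ∧
      (∀ K ∈ 𝒦, Cardinal.mk K = κ) ∧
      (∀ K₁ ∈ 𝒦, ∀ K₂ ∈ 𝒦, K₁ ≠ K₂ → Cardinal.mk ↥(K₁ ∩ K₂) < κ) := by
  have hℵ : ℵ₀ ≤ κ := hreg.aleph0_le
  haveI : NoMaxOrder κ.ord.ToType := Cardinal.noMaxOrder hℵ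
  have hmkO : #κ.ord.ToType = κ := mk_ord_toType κ
  have hT : #(Σ β : κ.ord.ToType, Set (Iio β)) = κ := by
    apply le_antisymm
    · rw [mk_sigma]
      calc Cardinal.sum (fun β : κ.ord.ToType => #(Set (Iio β)))
          ≤ Cardinal.sum (fun _ : κ.ord.ToType => κ) := by
            apply Cardinal.sum_le_sum
            intro β
            rw [mk_set]
            have := le_powerlt (b := κ) 2 (mk_Iio_ord_toType β)
            rwa [hpow] at this
        _ = #κ.ord.ToType * κ := by rw [Cardinal.sum_const']
        _ = κ := by rw [hmkO, Cardinal.mul_eq_self hℵ]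
    · refine le_trans hmkO.ge (mk_le_of_injective
        (f := fun β : κ.ord.ToType => (⟨β, ∅⟩ : Σ β : κ.ord.ToType, Set (Iio β)))
        (fun a b h => by simpa using congrArg Sigma.fst h))
  obtain ⟨e⟩ : Nonempty ((Σ β : κ.ord.ToType, Set (Iio β)) ≃ κ.ord.ToType) :=
    Cardinal.eq.mp (hT.trans hmkO.symm)
  set g : Set κ.ord.ToType → κ.ord.ToType → κ.ord.ToType :=
    fun A β => e ⟨β, {x : Iio β | (x : κ.ord.ToType) ∈ A}⟩ with hg
  have hginj : ∀ {A B : Set κ.ord.ToType} {β β'}, g A β = g B β' →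
      β = β' ∧ ({x : Iio β | (x : κ.ord.ToType) ∈ A} : Set (Iio β)) =
        {x : Iio β | (x : κ.ord.ToType) ∈ B} := by
    intro A B β β' h
    have h2 := e.injective h
    obtain ⟨h3, h4⟩ := Sigma.mk.inj_iff.mp h2
    subst h3
    exact ⟨rfl, eq_of_heq h4⟩
  have hrestr : ∀ {A B : Set κ.ord.ToType} {β : κ.ord.ToType},
      ({x : Iio β | (x : κ.ord.ToType) ∈ A} : Set (Iio β)) =
        {x : Iio β | (x : κ.ord.ToType) ∈ B} →
      ∀ x < β, (x ∈ A ↔ x ∈ B) := by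
    intro A B β h x hx
    have := Set.ext_iff.mp h ⟨x, hx⟩
    simpa using this
  have hFinj : Function.Injective (fun A => Set.range (g A)) := by
    intro A B h
    ext x
    obtain ⟨β, hβ⟩ := exists_gt x
    have hAB : Set.range (g A) = Set.range (g B) := h
    have : g A β ∈ Set.range (g B) := hAB ▸ Set.mem_range_self β
    obtain ⟨β', hβ'⟩ := this
    obtain ⟨rfl, hre⟩ := hginj hβ'.symm
    exact hrestr hre x hβ
  refine ⟨Set.range (fun A => Set.range (g A)), ?_, ?_, ?_⟩
  · rw [mk_range_eq _ hFinj, mk_set, hmkO]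
  · rintro K ⟨A, rfl⟩
    rw [mk_range_eq _ (fun β β' h => (hginj h).1), hmkO]
  · rintro K₁ ⟨A, rfl⟩ K₂ ⟨B, rfl⟩ hne
    have hAB : A ≠ B := fun h => hne (by rw [h])
    obtain ⟨x, hx⟩ : ∃ x, ¬(x ∈ A ↔ x ∈ B) := by
      by_contra h
      push_neg at h
      exact hAB (Set.ext h)
    obtain ⟨y, hy⟩ := exists_gt x
    have hsub : (Set.range (g A) ∩ Set.range (g B)) ⊆ g A '' (Iio y) := by
      rintro z ⟨⟨β, rfl⟩, ⟨β', hβ'⟩⟩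
      obtain ⟨rfl, hre⟩ := hginj hβ'.symm
      refine ⟨β, ?_, rfl⟩
      by_contra hβy
      exact hx (hrestr hre x (lt_of_lt_of_le hy (not_lt.mp hβy)))
    calc #(Set.range (g A) ∩ Set.range (g B) : Set κ.ord.ToType)
        ≤ #(g A '' (Iio y)) := mk_le_mk_of_subset hsub
      _ ≤ #(Iio y) := mk_image_le
      _ < κ := mk_Iio_ord_toType y
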